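/- Let f ∈ ℕⁿ be a frequency vector with m = ∑_i f_i > 0, and let G : ℕ → ℝ≥0 satisfy G(0) = 0 and 0 ≤ G(x) - G(x-1) ≤ ζ for all x ≥ 1 with ζ > 0. Consider the random process that picks a stream position uniformly at random (i.e., picks coordinate i and occurrence index j ∈ {1,...,f_i} with probability 1/m each), and then accepts with probability (G(f_i - j + 1) - G(f_i - j))/ζ. Then the probability that coordinate i is accepted equals G(f_i)/(ζ·m). -/

import Mathlib

open Finset

lemma telescope_aux (G : ℕ → ℝ) (hG0 : G 0 = 0) (k : ℕ) :
    ∑ j ∈ Finset.Icc 1 k, (G (k - j + 1) - G (k - j)) = G k := by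
  have h : ∑ j ∈ Finset.Icc 1 k, (G (k - j + 1) - G (k - j))
      = ∑ t ∈ Finset.range k, (G (t + 1) - G t) := by
    apply Finset.sum_nbij' (fun j => k - j) (fun t => k - t)
    · intro j hj
      simp only [Finset.mem_Icc] at hj
      simp only [Finset.mem_range]
      omega
    · intro t ht
      simp only [Finset.mem_range] at ht
      simp only [Finset.mem_Icc]
      omega
    · intro j hj; simp only [Finset.mem_Icc] at hj; omega
    · intro t ht; simp only [Finset.mem_range] at ht; omega
    · intro j hj; rfl
  rw [h, Finset.sum_range_sub, hG0, sub_zero]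

/-- In the truly perfect `G`-sampler framework: pick a stream position uniformly at
random (coordinate `i` together with occurrence index `j ∈ {1,…,f i}`, each with
probability `1/m`), then accept with probability `(G (f i - j + 1) - G (f i - j))/ζ`.
The probability that coordinate `i` is accepted equals `G (f i) / (ζ * m)`. -/
theorem sampler_accept_prob (n : ℕ) (f : Fin n → ℕ) (m : ℕ) (hm : m = ∑ i, f i)
    (hm0 : 0 < m) (G : ℕ → ℝ) (hG0 : G 0 = 0) (ζ : ℝ) (hζ : 0 < ζ)
    (hdiff : ∀ x : ℕ, 1 ≤ x → 0 ≤ G x - G (x - 1) ∧ G x - G (x - 1) ≤ ζ)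
    (i : Fin n) :
    ∑ j ∈ Finset.Icc 1 (f i), (1 / (m : ℝ)) * ((G (f i - j + 1) - G (f i - j)) / ζ)
      = G (f i) / (ζ * m) := by
  have hm' : (m : ℝ) ≠ 0 := Nat.cast_ne_zero.mpr hm0.ne'
  rw [← Finset.mul_sum]
  rw [← Finset.sum_div, telescope_aux G hG0]
  field_simp
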